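/- Let $E$ be a number field admitting a $\mathbb{Q}$-algebra automorphism $c : E \to E$ with $c \circ c = \mathrm{id}$, $c \neq \mathrm{id}$, and such that $\sigma \circ c = \overline{(\cdot)} \circ \sigma$ (complex conjugation after $\sigma$) for every ring embedding $\sigma : E \to \mathbb{C}$. Let $\Phi$ be a CM-type of $E$, i.e. a set of embeddings $E \to \mathbb{C}$ containing, for every embedding $\sigma$, exactly one element of the pair $\{\sigma, \overline{(\cdot)}\circ\sigma\}$. Then the image of the set $\{x \in E : c(x) = -x\}$ under the map $x \mapsto (\sigma(x))_{\sigma \in \Phi} \in \mathbb{C}^{\Phi}$ is dense in the real subspace $\{z \in \mathbb{C}^{\Phi} : \mathrm{Re}(z_\sigma) = 0 \text{ for all } \sigma \in \Phi\}$ of purely imaginary tuples. -/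
import Mathlib


open Complex

private lemma aux_conj_conj {E : Type*} [Field E] (σ : E →+* ℂ) :
    (starRingEnd ℂ).comp ((starRingEnd ℂ).comp σ) = σ :=
  RingHom.ext fun x => Complex.conj_conj _

/-- The image of `E` under `x ↦ (σ x)_{σ ∈ Φ}` spans `ℂ^Φ` over `ℝ`. -/
private lemma aux_span (E : Type*) [Field E] [NumberField E]
    (Φ : Set (E →+* ℂ))
    (hΦ : ∀ σ : E →+* ℂ, σ ∈ Φ ↔ (starRingEnd ℂ).comp σ ∉ Φ) :
    Submodule.span ℝ (Set.range (fun (x : E) (σ : Φ) => (σ : E →+* ℂ) x)) = ⊤ := by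
  classical
  by_contra hne
  obtain ⟨f, hf0, hmap⟩ := Submodule.exists_dual_map_eq_bot_of_lt_top
    (p := Submodule.span ℝ (Set.range (fun (x : E) (σ : Φ) => (σ : E →+* ℂ) x)))
    (lt_top_iff_ne_top.mpr hne) inferInstance
  set L := fun (x : E) (σ : Φ) => (σ : E →+* ℂ) x with hL
  have hvanish : ∀ x : E, f (L x) = 0 := by
    intro x
    have : f (L x) ∈ Submodule.map f
        (Submodule.span ℝ (Set.range L)) :=
      Submodule.mem_map_of_mem (Submodule.subset_span ⟨x, rfl⟩)
    rwa [hmap, Submodule.mem_bot] at this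
  -- express `f` through complex coefficients `a`
  set a : Φ → ℂ := fun σ =>
    ((f (Pi.single σ 1) : ℝ) : ℂ) - ((f (Pi.single σ I) : ℝ) : ℂ) * I with ha
  have hsingle : ∀ (σ : Φ) (w : ℂ), f (Pi.single σ w) = (a σ * w).re := by
    intro σ w
    have hw : Pi.single σ w
        = (w.re : ℝ) • (Pi.single σ (1 : ℂ) : Φ → ℂ)
          + (w.im : ℝ) • (Pi.single σ I : Φ → ℂ) := by
      funext j
      simp only [Pi.add_apply, Pi.smul_apply]
      rcases eq_or_ne j σ with rfl | hj
      · simp [Complex.real_smul, Complex.re_add_im]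
      · simp [Pi.single_eq_of_ne hj]
    rw [hw, map_add, map_smul, map_smul, smul_eq_mul, smul_eq_mul, ha]
    simp [Complex.mul_re, Complex.sub_re, Complex.sub_im, Complex.mul_im]
    ring
  have hf_eq : ∀ z : Φ → ℂ, f z = (∑ σ : Φ, a σ * z σ).re := by
    intro z
    conv_lhs => rw [← Finset.univ_sum_single z]
    rw [map_sum, Complex.re_sum]
    exact Finset.sum_congr rfl fun σ _ => hsingle σ (z σ)
  -- `a` is not identically zero
  have hexa : ∃ σ : Φ, a σ ≠ 0 := by
    by_contra h
    push_neg at h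
    apply hf0
    apply LinearMap.ext
    intro z
    rw [hf_eq]
    simp [h]
  obtain ⟨σ₀, hσ₀⟩ := hexa
  -- extend `a` to all embeddings
  set b : (E →+* ℂ) → ℂ := fun τ =>
    if h : τ ∈ Φ then a ⟨τ, h⟩
    else starRingEnd ℂ (a ⟨(starRingEnd ℂ).comp τ, by
      rw [hΦ ((starRingEnd ℂ).comp τ), aux_conj_conj τ]; exact h⟩) with hb
  -- the equivalence `Φ ⊕ Φ ≃ (E →+* ℂ)`
  have hbij : Function.Bijective
      (Sum.elim (Subtype.val : Φ → (E →+* ℂ))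
        (fun σ : Φ => (starRingEnd ℂ).comp σ)) := by
    constructor
    · rintro (σ | σ) (σ' | σ') h <;>
        simp only [Sum.elim_inl, Sum.elim_inr] at h
      · exact congrArg Sum.inl (Subtype.ext h)
      · exfalso
        have h1 : ((starRingEnd ℂ).comp (σ' : E →+* ℂ)) ∈ Φ := by
          rw [← h]; exact σ.2
        exact (hΦ (σ' : E →+* ℂ)).mp σ'.2 h1
      · exfalso
        have h1 : ((starRingEnd ℂ).comp (σ : E →+* ℂ)) ∈ Φ := by
          rw [h]; exact σ'.2
        exact (hΦ (σ : E →+* ℂ)).mp σ.2 h1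
      · refine congrArg Sum.inr (Subtype.ext ?_)
        calc (σ : E →+* ℂ)
            = (starRingEnd ℂ).comp ((starRingEnd ℂ).comp (σ : E →+* ℂ)) :=
              (aux_conj_conj _).symm
          _ = (starRingEnd ℂ).comp ((starRingEnd ℂ).comp (σ' : E →+* ℂ)) := by rw [h]
          _ = (σ' : E →+* ℂ) := aux_conj_conj _
    · intro τ
      by_cases h : τ ∈ Φ
      · exact ⟨Sum.inl ⟨τ, h⟩, rfl⟩
      · refine ⟨Sum.inr ⟨(starRingEnd ℂ).comp τ, ?_⟩, ?_⟩
        · rw [hΦ ((starRingEnd ℂ).comp τ), aux_conj_conj τ]; exact h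
        · exact aux_conj_conj τ
  have hsum0 : ∀ x : E, ∑ τ : E →+* ℂ, b τ * τ x = 0 := by
    intro x
    rw [← Function.Bijective.sum_comp hbij (fun τ => b τ * τ x),
      Fintype.sum_sum_type]
    have h1 : ∀ σ : Φ,
        b (Sum.elim (Subtype.val : Φ → (E →+* ℂ))
          (fun σ : Φ => (starRingEnd ℂ).comp σ) (Sum.inl σ))
        * (Sum.elim (Subtype.val : Φ → (E →+* ℂ))
          (fun σ : Φ => (starRingEnd ℂ).comp σ) (Sum.inl σ)) x
        = a σ * (σ : E →+* ℂ) x := by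
      intro σ
      simp only [Sum.elim_inl, hb, dif_pos σ.2, Subtype.coe_eta]
    have h2 : ∀ σ : Φ,
        b (Sum.elim (Subtype.val : Φ → (E →+* ℂ))
          (fun σ : Φ => (starRingEnd ℂ).comp σ) (Sum.inr σ))
        * (Sum.elim (Subtype.val : Φ → (E →+* ℂ))
          (fun σ : Φ => (starRingEnd ℂ).comp σ) (Sum.inr σ)) x
        = starRingEnd ℂ (a σ * (σ : E →+* ℂ) x) := by
      intro σ
      have hnot : ((starRingEnd ℂ).comp (σ : E →+* ℂ)) ∉ Φ := (hΦ _).mp σ.2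
      simp only [Sum.elim_inr, hb, dif_neg hnot]
      rw [map_mul]
      congr 2
      exact congrArg a (Subtype.ext (aux_conj_conj (σ : E →+* ℂ)))
    rw [Finset.sum_congr rfl (fun σ _ => h1 σ),
      Finset.sum_congr rfl (fun σ _ => h2 σ), ← map_sum]
    have hre : (∑ σ : Φ, a σ * (σ : E →+* ℂ) x).re = 0 := by
      rw [← hf_eq (L x)]; exact hvanish x
    rw [Complex.add_conj, hre]
    simp
  -- linear independence of characters
  have hinj : Function.Injective (fun τ : E →+* ℂ => (τ : E →* ℂ)) := by
    intro τ τ' h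
    exact RingHom.ext fun x => DFunLike.congr_fun h x
  have li : LinearIndependent ℂ (fun τ : E →+* ℂ => (τ : E → ℂ)) :=
    (linearIndependent_monoidHom E ℂ).comp _ hinj
  have hb0 : ∀ τ : E →+* ℂ, b τ = 0 := by
    have := Fintype.linearIndependent_iff.mp li b ?_
    · exact this
    · funext x
      rw [Finset.sum_apply]
      simpa using hsum0 x
  apply hσ₀
  simpa only [hb, dif_pos σ₀.2, Subtype.coe_eta] using hb0 (σ₀ : E →+* ℂ)

/-- A subset of `ℂ^n` which contains `0`, is closed under addition and rational
scalar multiplication, and spans over `ℝ`, is dense. -/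
private lemma aux_dense {n : Type*} (s : Set (n → ℂ))
    (h0 : (0 : n → ℂ) ∈ s) (hadd : ∀ x ∈ s, ∀ y ∈ s, x + y ∈ s)
    (hsmul : ∀ (q : ℚ), ∀ x ∈ s, (q : ℝ) • x ∈ s)
    (hspan : Submodule.span ℝ s = ⊤) : Dense s := by
  have hsm : ∀ (r : ℝ), ∀ x ∈ closure s, r • x ∈ closure s := by
    intro r x hx
    have h1 : (r, x) ∈ closure ((Set.range ((↑) : ℚ → ℝ)) ×ˢ s) := by
      rw [closure_prod_eq]
      exact ⟨Rat.denseRange_cast r, hx⟩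
    have h2 : r • x ∈ closure
        ((fun p : ℝ × (n → ℂ) => p.1 • p.2) '' ((Set.range ((↑) : ℚ → ℝ)) ×ˢ s)) :=
      image_closure_subset_closure_image continuous_smul ⟨(r, x), h1, rfl⟩
    refine closure_mono ?_ h2
    rintro _ ⟨⟨r', y⟩, ⟨⟨q, rfl⟩, hy⟩, rfl⟩
    exact hsmul q y hy
  have hadd_cl : ∀ x ∈ closure s, ∀ y ∈ closure s, x + y ∈ closure s := by
    intro x hx y hy
    have h1 : (x, y) ∈ closure (s ×ˢ s) := by
      rw [closure_prod_eq]; exact ⟨hx, hy⟩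
    have h2 : x + y ∈ closure
        ((fun p : (n → ℂ) × (n → ℂ) => p.1 + p.2) '' (s ×ˢ s)) :=
      image_closure_subset_closure_image continuous_add ⟨(x, y), h1, rfl⟩
    refine closure_mono ?_ h2
    rintro _ ⟨⟨x', y'⟩, ⟨hx', hy'⟩, rfl⟩
    exact hadd x' hx' y' hy'
  set S : Submodule ℝ (n → ℂ) :=
    { carrier := closure s
      add_mem' := fun hx hy => hadd_cl _ hx _ hy
      zero_mem' := subset_closure h0
      smul_mem' := fun r x hx => hsm r x hx } with hS
  have hle : Submodule.span ℝ s ≤ S := Submodule.span_le.mpr subset_closure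
  rw [hspan] at hle
  exact fun x => hle Submodule.mem_top

/-- **Density of anti-symmetric elements of a CM field in the purely imaginary tuples.**
Let `E` be a number field with a complex conjugation `c` (an involutive nontrivial
`ℚ`-algebra automorphism commuting with complex conjugation through every embedding
`E → ℂ`), and let `Φ` be a CM-type of `E`. Then the image of the anti-symmetric
elements `{x : E | c x = -x}` under `x ↦ (σ x)_{σ ∈ Φ}` is dense in the set of
purely imaginary tuples in `ℂ^Φ`. -/
theorem antisymmetric_dense_in_imaginary (E : Type*) [Field E] [NumberField E]
    (c : E ≃ₐ[ℚ] E) (hc2 : ∀ x, c (c x) = x) (hc_ne : c ≠ AlgEquiv.refl (R := ℚ) (A₁ := E))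
    (hconj : ∀ (σ : E →+* ℂ) (x : E), σ (c x) = starRingEnd ℂ (σ x))
    (Φ : Set (E →+* ℂ))
    (hΦ : ∀ σ : E →+* ℂ, σ ∈ Φ ↔ (starRingEnd ℂ).comp σ ∉ Φ) :
    {z : Φ → ℂ | ∀ σ : Φ, (z σ).re = 0}
      ⊆ closure ((fun (x : E) (σ : Φ) => (σ : E →+* ℂ) x) '' {x : E | c x = -x}) := by
  classical
  intro z hz
  set L := fun (x : E) (σ : Φ) => (σ : E →+* ℂ) x with hL
  have hdense : Dense (Set.range L) := by
    refine aux_dense _ ⟨0, ?_⟩ ?_ ?_ (aux_span E Φ hΦ)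
    · funext σ; simp [hL]
    · rintro _ ⟨x, rfl⟩ _ ⟨y, rfl⟩
      exact ⟨x + y, by funext σ; simp [hL]⟩
    · rintro q _ ⟨x, rfl⟩
      refine ⟨q • x, ?_⟩
      funext σ
      simp only [hL, Pi.smul_apply]
      rw [Rat.smul_def, map_mul, map_ratCast, Complex.real_smul, Complex.ofReal_ratCast]
  set P : (Φ → ℂ) → (Φ → ℂ) := fun w σ => ((w σ).im : ℂ) * I with hP
  have hPcont : Continuous P :=
    continuous_pi fun σ =>
      ((Complex.continuous_ofReal.comp
        (Complex.continuous_im.comp (continuous_apply σ))).mul continuous_const)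
  have hPz : P z = z := by
    funext σ
    have h := hz σ
    rw [hP]
    apply Complex.ext <;> simp [h]
  have hPL : ∀ x : E, P (L x) = L ((2 : E)⁻¹ * (x - c x)) := by
    intro x
    funext σ
    have h1 : (σ : E →+* ℂ) ((2 : E)⁻¹ * (x - c x))
        = (2 : ℂ)⁻¹ * ((σ : E →+* ℂ) x - starRingEnd ℂ ((σ : E →+* ℂ) x)) := by
      rw [map_mul, map_sub, hconj, map_inv₀, map_ofNat]
    simp only [hP, hL, h1, Complex.sub_conj]
    rw [Complex.ofReal_mul]
    push_cast
    ring
  have hmem : ∀ x : E, (2 : E)⁻¹ * (x - c x) ∈ {x : E | c x = -x} := by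
    intro x
    simp only [Set.mem_setOf_eq, map_mul, map_sub, hc2, map_inv₀, map_ofNat]
    ring
  have h1 : z ∈ P '' closure (Set.range L) :=
    ⟨z, by rw [hdense.closure_eq]; trivial, hPz⟩
  have h2 : P '' closure (Set.range L) ⊆ closure (P '' Set.range L) :=
    image_closure_subset_closure_image hPcont
  have h3 : P '' Set.range L ⊆ L '' {x : E | c x = -x} := by
    rintro _ ⟨_, ⟨x, rfl⟩, rfl⟩
    exact ⟨_, hmem x, (hPL x).symm⟩
  exact closure_mono h3 (h2 h1)
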